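/- Let m ≤ n and r be positive integers, and let S₁, …, Sₙ be pairwise distinct non-empty subsets of {1, …, r}. For the action of (ℤ/2)^r on the Milnor manifold H(m,n) in which g sends ([x],[y]) to ([σ(g)x],[τ(g)y]) (σ(g) multiplying x_k by (−1)^{∑_{i∈S_k} g_i} for 1 ≤ k ≤ m and fixing x₀, τ(g) multiplying y_k by (−1)^{∑_{i∈S_k} g_i} for 1 ≤ k ≤ n and fixing y₀), the set of points of H(m,n) fixed by every g ∈ (ℤ/2)^r is finite of cardinality (m+1)·n. -/

import Mathlib

open scoped BigOperators
open scoped LinearAlgebra.Projectivization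

noncomputable section

/-- The sign `(-1)^{∑_{i ∈ S} g i}` attached to a subset `S ⊆ {1,…,r}` and
an element `g ∈ (ℤ/2)^r`. -/
def milnorSign {r : ℕ} (S : Finset (Fin r)) (g : Fin r → ZMod 2) : ℝ :=
  (-1 : ℝ) ^ (∑ i ∈ S, g i).val

lemma milnorSign_ne_zero {r : ℕ} (S : Finset (Fin r)) (g : Fin r → ZMod 2) :
    milnorSign S g ≠ 0 :=
  pow_ne_zero _ (by norm_num)

/-- The coefficients of the sign-change map on `ℝ^{m+1}` determined by the subsets
`S₁, …, Sₙ` (with `m ≤ n`): coordinate `0` is fixed, and coordinate `k` (for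
`1 ≤ k ≤ m`) is multiplied by `(-1)^{∑_{i ∈ S_k} g_i}`. -/
def actCoef {n r : ℕ} (m : ℕ) (hmn : m ≤ n) (S : Fin n → Finset (Fin r))
    (g : Fin r → ZMod 2) : Fin (m + 1) → ℝ :=
  Fin.cases 1 fun k => milnorSign (S (Fin.castLE hmn k)) g

lemma actCoef_ne_zero {n r : ℕ} (m : ℕ) (hmn : m ≤ n) (S : Fin n → Finset (Fin r))
    (g : Fin r → ZMod 2) (k : Fin (m + 1)) : actCoef m hmn S g k ≠ 0 := by
  induction k using Fin.cases with
  | zero => simp [actCoef]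
  | succ k => simpa [actCoef] using milnorSign_ne_zero (S (Fin.castLE hmn k)) g

/-- The sign-change map on `ℝ^{m+1}` as a linear automorphism. -/
def actEquiv {n r : ℕ} (m : ℕ) (hmn : m ≤ n) (S : Fin n → Finset (Fin r))
    (g : Fin r → ZMod 2) : (Fin (m + 1) → ℝ) ≃ₗ[ℝ] (Fin (m + 1) → ℝ) :=
  LinearEquiv.piCongrRight fun k =>
    LinearEquiv.smulOfNeZero ℝ ℝ (actCoef m hmn S g k) (actCoef_ne_zero m hmn S g k)

/-- The induced map on the projective space `ℙ(ℝ^{m+1})`. -/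
def actMap {n r : ℕ} (m : ℕ) (hmn : m ≤ n) (S : Fin n → Finset (Fin r))
    (g : Fin r → ZMod 2) : ℙ ℝ (Fin (m + 1) → ℝ) → ℙ ℝ (Fin (m + 1) → ℝ) :=
  Projectivization.map (actEquiv m hmn S g).toLinearMap (actEquiv m hmn S g).injective

/-- The Milnor manifold `H(m,n) ⊆ ℙ(ℝ^{m+1}) × ℙ(ℝ^{n+1})`, consisting of pairs
`([x],[y])` with `∑_{j=0}^{m} x_j y_j = 0` (a condition independent of the choice of
representatives, here expressed using the canonical representatives). -/
def milnorSet (m n : ℕ) (hmn : m ≤ n) :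
    Set (ℙ ℝ (Fin (m + 1) → ℝ) × ℙ ℝ (Fin (n + 1) → ℝ)) :=
  {p | ∑ j : Fin (m + 1), p.1.rep j * p.2.rep (Fin.castLE (by omega) j) = 0}

lemma actEquiv_apply {n r : ℕ} (m : ℕ) (hmn : m ≤ n) (S : Fin n → Finset (Fin r))
    (g : Fin r → ZMod 2) (v : Fin (m+1) → ℝ) (k : Fin (m+1)) :
    actEquiv m hmn S g v k = actCoef m hmn S g k * v k := rfl

lemma milnorSign_indicator {r : ℕ} (S : Finset (Fin r)) (i0 : Fin r) :
    milnorSign S (fun j => if j = i0 then 1 else 0) = if i0 ∈ S then (-1:ℝ) else 1 := by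
  unfold milnorSign
  rw [Finset.sum_ite_eq' S i0 (fun _ => (1 : ZMod 2))]
  by_cases h : i0 ∈ S <;> simp [h, ZMod.val_one]

lemma milnorSign_sep {r : ℕ} {S1 S2 : Finset (Fin r)} (h : S1 ≠ S2) :
    ∃ g : Fin r → ZMod 2, milnorSign S1 g ≠ milnorSign S2 g := by
  have : ∃ i0, ¬ (i0 ∈ S1 ↔ i0 ∈ S2) := by
    by_contra hc
    push_neg at hc
    exact h (Finset.ext fun a => hc a)
  obtain ⟨i0, hi0⟩ := this
  refine ⟨fun j => if j = i0 then 1 else 0, ?_⟩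
  rw [milnorSign_indicator, milnorSign_indicator]
  rcases Decidable.em (i0 ∈ S1) with h1 | h1 <;> rcases Decidable.em (i0 ∈ S2) with h2 | h2 <;>
    simp [h1, h2] at hi0 ⊢ <;> norm_num

lemma milnorSign_empty {r : ℕ} (g : Fin r → ZMod 2) : milnorSign ∅ g = 1 := by
  simp [milnorSign]

lemma actCoef_sep {n r : ℕ} (m : ℕ) (hmn : m ≤ n) (S : Fin n → Finset (Fin r))
    (hSne : ∀ k, (S k).Nonempty) (hSdist : Function.Injective S)
    {k k' : Fin (m + 1)} (hkk : k ≠ k') :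
    ∃ g : Fin r → ZMod 2, actCoef m hmn S g k ≠ actCoef m hmn S g k' := by
  have hne : ∀ j : Fin n, (∅ : Finset (Fin r)) ≠ S j := fun j h =>
    (hSne j).ne_empty h.symm
  induction k using Fin.cases with
  | zero =>
    induction k' using Fin.cases with
    | zero => exact absurd rfl hkk
    | succ k' =>
      obtain ⟨g, hg⟩ := milnorSign_sep (hne (Fin.castLE hmn k'))
      exact ⟨g, by simpa [actCoef, milnorSign_empty] using hg⟩
  | succ k =>
    induction k' using Fin.cases with
    | zero =>
      obtain ⟨g, hg⟩ := milnorSign_sep (hne (Fin.castLE hmn k))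
      exact ⟨g, by simpa [actCoef, milnorSign_empty] using hg.symm⟩
    | succ k' =>
      have hSS : S (Fin.castLE hmn k) ≠ S (Fin.castLE hmn k') := by
        intro h
        apply hkk
        have h2 := hSdist h
        have hk : k = k' := Fin.castLE_injective hmn h2
        exact congrArg Fin.succ hk
      obtain ⟨g, hg⟩ := milnorSign_sep hSS
      exact ⟨g, by simpa [actCoef] using hg⟩

lemma single_ne_zero' {N : ℕ} (i : Fin (N + 1)) : (Pi.single i (1:ℝ) : Fin (N+1) → ℝ) ≠ 0 := by
  intro h
  have := congrFun h i
  simp at this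

lemma fixed_char {n r : ℕ} (m : ℕ) (hmn : m ≤ n) (S : Fin n → Finset (Fin r))
    (hSne : ∀ k, (S k).Nonempty) (hSdist : Function.Injective S)
    (x : ℙ ℝ (Fin (m + 1) → ℝ)) :
    (∀ g : Fin r → ZMod 2, actMap m hmn S g x = x) ↔
      ∃ i, x = Projectivization.mk ℝ (Pi.single i (1:ℝ)) (single_ne_zero' i) := by
  constructor
  · intro hfix
    set v := x.rep with hv
    have hvne : v ≠ 0 := x.rep_nonzero
    have hx : x = Projectivization.mk ℝ v hvne := (Projectivization.mk_rep x).symm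
    have key : ∀ g : Fin r → ZMod 2, ∃ c : ℝ,
        ∀ k, actCoef m hmn S g k * v k = c * v k := by
      intro g
      have := hfix g
      rw [hx, actMap, Projectivization.map_mk] at this
      rw [Projectivization.mk_eq_mk_iff'] at this
      obtain ⟨c, hc⟩ := this
      refine ⟨c, fun k => ?_⟩
      have := congrFun hc k
      simpa [actEquiv_apply] using this.symm
    obtain ⟨i, hi⟩ : ∃ i, v i ≠ 0 := by
      by_contra hc
      push_neg at hc
      exact hvne (funext fun k => hc k)
    have hzero : ∀ k, k ≠ i → v k = 0 := by
      intro k hk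
      by_contra hvk
      obtain ⟨g, hg⟩ := actCoef_sep m hmn S hSne hSdist hk
      obtain ⟨c, hc⟩ := key g
      apply hg
      have h1 := hc k
      have h2 := hc i
      have e1 : actCoef m hmn S g k = c := by
        exact mul_right_cancel₀ hvk h1
      have e2 : actCoef m hmn S g i = c := by
        exact mul_right_cancel₀ hi h2
      rw [e1, e2]
    refine ⟨i, ?_⟩
    rw [hx, Projectivization.mk_eq_mk_iff']
    refine ⟨v i, funext fun k => ?_⟩
    by_cases h : k = i
    · subst h; simp
    · simp [Pi.single_apply, h, hzero k h]
  · rintro ⟨i, rfl⟩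
    intro g
    rw [actMap, Projectivization.map_mk, Projectivization.mk_eq_mk_iff']
    refine ⟨actCoef m hmn S g i, funext fun k => ?_⟩
    by_cases h : k = i
    · subst h; simp [actEquiv_apply]
    · simp [actEquiv_apply, Pi.single_apply, h]

lemma milnor_mem_iff (m n : ℕ) (hmn : m ≤ n) (i : Fin (m + 1)) (j : Fin (n + 1)) :
    ((Projectivization.mk ℝ (Pi.single i (1:ℝ) : Fin (m+1) → ℝ) (single_ne_zero' i),
      Projectivization.mk ℝ (Pi.single j (1:ℝ) : Fin (n+1) → ℝ) (single_ne_zero' j)) ∈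
        milnorSet m n hmn) ↔ Fin.castLE (by omega) i ≠ j := by
  obtain ⟨a, ha⟩ := Projectivization.exists_smul_eq_mk_rep ℝ
    (Pi.single i (1:ℝ) : Fin (m+1) → ℝ) (single_ne_zero' i)
  obtain ⟨b, hb⟩ := Projectivization.exists_smul_eq_mk_rep ℝ
    (Pi.single j (1:ℝ) : Fin (n+1) → ℝ) (single_ne_zero' j)
  have hsum : ∑ k : Fin (m + 1),
      (Projectivization.mk ℝ (Pi.single i (1:ℝ) : Fin (m+1) → ℝ) (single_ne_zero' i)).rep k *
      (Projectivization.mk ℝ (Pi.single j (1:ℝ) : Fin (n+1) → ℝ) (single_ne_zero' j)).rep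
        (Fin.castLE (by omega) k) =
      (a : ℝ) * b * (if Fin.castLE (by omega : m + 1 ≤ n + 1) i = j then 1 else 0) := by
    rw [← ha, ← hb]
    rw [Finset.sum_eq_single i]
    · simp only [Pi.smul_apply, Units.smul_def, smul_eq_mul, Pi.single_apply, if_pos rfl,
        mul_one]
      split_ifs <;> ring
    · intro k _ hk
      simp [Pi.single_apply, hk]
    · simp
  rw [milnorSet, Set.mem_setOf_eq]
  rw [hsum]
  by_cases h : Fin.castLE (by omega : m + 1 ≤ n + 1) i = j
  · simp [h, a.ne_zero, b.ne_zero]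
  · simp [h]

lemma mk_single_injective {N : ℕ} :
    Function.Injective (fun i : Fin (N + 1) =>
      Projectivization.mk ℝ (Pi.single i (1:ℝ) : Fin (N+1) → ℝ) (single_ne_zero' i)) := by
  intro i i' h
  simp only at h
  rw [Projectivization.mk_eq_mk_iff'] at h
  obtain ⟨c, hc⟩ := h
  by_contra hne
  have := congrFun hc i
  simp [Pi.single_apply, hne, Ne.symm hne] at this

/-- For `m ≤ n` and `r` positive and pairwise distinct non-empty subsets
`S₁, …, Sₙ ⊆ {1,…,r}`, the set of points of the Milnor manifold `H(m,n)` fixed by every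
`g ∈ (ℤ/2)^r` (acting via the sign changes `σ(g)`, `τ(g)`) is finite of cardinality
`(m+1)·n`. -/
theorem milnor_fixed_points_card
    (m n r : ℕ) (hm : 0 < m) (hn : 0 < n) (hr : 0 < r) (hmn : m ≤ n)
    (S : Fin n → Finset (Fin r)) (hSne : ∀ k, (S k).Nonempty)
    (hSdist : Function.Injective S) :
    ({p ∈ milnorSet m n hmn | ∀ g : Fin r → ZMod 2,
        actMap m hmn S g p.1 = p.1 ∧ actMap n le_rfl S g p.2 = p.2}).Finite ∧
    Set.ncard {p ∈ milnorSet m n hmn | ∀ g : Fin r → ZMod 2,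
        actMap m hmn S g p.1 = p.1 ∧ actMap n le_rfl S g p.2 = p.2} = (m + 1) * n := by
  set E : Fin (m + 1) × Fin (n + 1) →
      ℙ ℝ (Fin (m + 1) → ℝ) × ℙ ℝ (Fin (n + 1) → ℝ) :=
    fun p => (Projectivization.mk ℝ (Pi.single p.1 (1:ℝ) : Fin (m+1) → ℝ) (single_ne_zero' p.1),
      Projectivization.mk ℝ (Pi.single p.2 (1:ℝ) : Fin (n+1) → ℝ) (single_ne_zero' p.2))
    with hE
  have hEinj : Function.Injective E := by
    intro p q h
    rw [Prod.ext_iff] at h ⊢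
    exact ⟨mk_single_injective h.1, mk_single_injective h.2⟩
  have hset : {p ∈ milnorSet m n hmn | ∀ g : Fin r → ZMod 2,
        actMap m hmn S g p.1 = p.1 ∧ actMap n le_rfl S g p.2 = p.2} =
      E '' {p : Fin (m + 1) × Fin (n + 1) | Fin.castLE (by omega) p.1 ≠ p.2} := by
    ext p
    simp only [Set.mem_setOf_eq, Set.mem_image]
    constructor
    · rintro ⟨hmem, hfix⟩
      obtain ⟨i, hi⟩ := (fixed_char m hmn S hSne hSdist p.1).1 fun g => (hfix g).1
      obtain ⟨j, hj⟩ := (fixed_char n le_rfl S hSne hSdist p.2).1 fun g => (hfix g).2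
      refine ⟨(i, j), ?_, ?_⟩
      · have : p = (Projectivization.mk ℝ (Pi.single i (1:ℝ) : Fin (m+1) → ℝ)
            (single_ne_zero' i), Projectivization.mk ℝ (Pi.single j (1:ℝ) : Fin (n+1) → ℝ)
            (single_ne_zero' j)) := Prod.ext hi hj
        rw [this] at hmem
        exact (milnor_mem_iff m n hmn i j).1 hmem
      · exact (Prod.ext hi hj).symm
    · rintro ⟨⟨i, j⟩, hij, rfl⟩
      refine ⟨(milnor_mem_iff m n hmn i j).2 hij, fun g => ?_⟩
      exact ⟨(fixed_char m hmn S hSne hSdist _).2 ⟨i, rfl⟩ g,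
        (fixed_char n le_rfl S hSne hSdist _).2 ⟨j, rfl⟩ g⟩
  rw [hset]
  refine ⟨(Set.toFinite _).image E, ?_⟩
  rw [Set.ncard_image_of_injective _ hEinj]
  have : {p : Fin (m + 1) × Fin (n + 1) | Fin.castLE (by omega) p.1 ≠ p.2} =
      ↑(Finset.univ.filter fun p : Fin (m + 1) × Fin (n + 1) =>
        Fin.castLE (by omega : m + 1 ≤ n + 1) p.1 ≠ p.2) := by
    ext p; simp
  rw [this, Set.ncard_coe_finset]
  have hgraph : (Finset.univ.filter fun p : Fin (m + 1) × Fin (n + 1) =>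
        Fin.castLE (by omega : m + 1 ≤ n + 1) p.1 = p.2) =
      Finset.univ.image (fun i : Fin (m + 1) => (i, Fin.castLE (by omega : m + 1 ≤ n + 1) i)) := by
    ext ⟨i, j⟩
    simp [Prod.ext_iff, eq_comm, and_comm]
  have hcard1 : (Finset.univ.filter fun p : Fin (m + 1) × Fin (n + 1) =>
        Fin.castLE (by omega : m + 1 ≤ n + 1) p.1 = p.2).card = m + 1 := by
    rw [hgraph, Finset.card_image_of_injective _ (fun a b h => (Prod.ext_iff.1 h).1),
      Finset.card_univ, Fintype.card_fin]
  have htot := Finset.card_filter_add_card_filter_not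
    (s := (Finset.univ : Finset (Fin (m + 1) × Fin (n + 1))))
    (p := fun p => Fin.castLE (by omega : m + 1 ≤ n + 1) p.1 = p.2)
  rw [Finset.card_univ] at htot
  simp only [Fintype.card_prod, Fintype.card_fin] at htot
  have hmul : (m + 1) * (n + 1) = (m + 1) * n + (m + 1) := by ring
  have hbridge : (Finset.univ.filter fun p : Fin (m + 1) × Fin (n + 1) =>
        Fin.castLE (by omega : m + 1 ≤ n + 1) p.1 ≠ p.2).card =
      (Finset.univ.filter fun p : Fin (m + 1) × Fin (n + 1) =>
        ¬ Fin.castLE (by omega : m + 1 ≤ n + 1) p.1 = p.2).card := rfl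
  omega
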